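/- For t ∈ ℂ, the bracket on the free ℂ-vector space with basis {l_n : n ≥ 1} defined by [l_n, l_m]_t = (m−n)(l_{n+m} + t l_{n+m−1}) satisfies the Jacobi identity, giving a one-parameter family of Lie algebras deforming L₁. -/

import Mathlib

noncomputable section

/-- Index set for `L₁`: integers `n ≥ 1`. -/
abbrev PosIdx : Type := {n : ℤ // 1 ≤ n}

/-- Bilinear extension of structure constants `C` to a bracket on the free module. -/
def brP (C : PosIdx → PosIdx → (PosIdx →₀ ℂ)) (x y : PosIdx →₀ ℂ) : PosIdx →₀ ℂ :=
  x.sum fun n a => y.sum fun m b => (a * b) • C n m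

/-- Structure constants of the first deformation of `L₁`:
`[l_n, l_m]_t = (m-n)(l_{n+m} + t l_{n+m-1})`. -/
def defC1 (t : ℂ) (n m : PosIdx) : PosIdx →₀ ℂ :=
  Finsupp.single ⟨n.1 + m.1, by have := n.2; have := m.2; omega⟩ ((m.1 : ℂ) - (n.1 : ℂ))
    + Finsupp.single ⟨n.1 + m.1 - 1, by have := n.2; have := m.2; omega⟩
        (t * ((m.1 : ℂ) - (n.1 : ℂ)))

lemma brP_zero_left (C) (y : PosIdx →₀ ℂ) : brP C 0 y = 0 := by simp [brP]

lemma brP_zero_right (C) (x : PosIdx →₀ ℂ) : brP C x 0 = 0 := by simp [brP]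

lemma brP_add_left (C) (x x' y : PosIdx →₀ ℂ) :
    brP C (x + x') y = brP C x y + brP C x' y := by
  unfold brP
  rw [Finsupp.sum_add_index']
  · intro n; simp
  · intro n a a'
    rw [← Finsupp.sum_add]
    congr 1; ext m b; rw [add_mul, add_smul]

lemma brP_add_right (C) (x y y' : PosIdx →₀ ℂ) :
    brP C x (y + y') = brP C x y + brP C x y' := by
  unfold brP
  rw [← Finsupp.sum_add]
  congr 1; ext n a
  rw [Finsupp.sum_add_index']
  · intro m; simp
  · intro m b b'; rw [mul_add, add_smul]

lemma brP_smul_left (C) (u : ℂ) (x y : PosIdx →₀ ℂ) :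
    brP C (u • x) y = u • brP C x y := by
  unfold brP
  rw [Finsupp.sum_smul_index (fun n => by simp), Finsupp.smul_sum]
  refine Finsupp.sum_congr fun n _ => ?_
  rw [Finsupp.smul_sum]
  refine Finsupp.sum_congr fun m _ => ?_
  rw [mul_assoc, mul_smul]

lemma brP_smul_right (C) (u : ℂ) (x y : PosIdx →₀ ℂ) :
    brP C x (u • y) = u • brP C x y := by
  unfold brP
  rw [Finsupp.smul_sum]
  refine Finsupp.sum_congr fun n a => ?_
  rw [Finsupp.sum_smul_index (fun m => by simp), Finsupp.smul_sum]
  refine Finsupp.sum_congr fun m _ => ?_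
  rw [smul_smul]; congr 1; ring

lemma brP_single_single (C) (n m : PosIdx) (a b : ℂ) :
    brP C (Finsupp.single n a) (Finsupp.single m b) = (a * b) • C n m := by
  unfold brP
  rw [Finsupp.sum_single_index, Finsupp.sum_single_index]
  · simp
  · simp

lemma defC1_core (t : ℂ) (n m p : PosIdx) :
    brP (defC1 t) (defC1 t n m) (Finsupp.single p 1)
      + brP (defC1 t) (defC1 t m p) (Finsupp.single n 1)
      + brP (defC1 t) (defC1 t p n) (Finsupp.single m 1) = 0 := by
  obtain ⟨N, hN⟩ := n; obtain ⟨M, hM⟩ := m; obtain ⟨P, hP⟩ := p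
  simp only [defC1, brP_add_left, brP_single_single]
  ext ⟨Q, hQ⟩
  simp only [Finsupp.coe_add, Pi.add_apply, Finsupp.smul_apply, Finsupp.single_apply,
    Subtype.mk.injEq, smul_eq_mul, Finsupp.coe_zero, Pi.zero_apply, mul_one, one_mul]
  ring_nf
  split_ifs <;> first | (exfalso; omega) | (push_cast; ring)

lemma add6 (a1 a2 b1 b2 c1 c2 : PosIdx →₀ ℂ) (h1 : a1 + b1 + c1 = 0)
    (h2 : a2 + b2 + c2 = 0) : a1 + a2 + (b1 + b2) + (c1 + c2) = 0 := by
  rw [show a1 + a2 + (b1 + b2) + (c1 + c2) = (a1 + b1 + c1) + (a2 + b2 + c2) from by abel,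
    h1, h2, add_zero]

lemma defC1_jacobi_single (t : ℂ) (n m p : PosIdx) (a b c : ℂ) :
    brP (defC1 t) (brP (defC1 t) (Finsupp.single n a) (Finsupp.single m b)) (Finsupp.single p c)
      + brP (defC1 t) (brP (defC1 t) (Finsupp.single m b) (Finsupp.single p c)) (Finsupp.single n a)
      + brP (defC1 t) (brP (defC1 t) (Finsupp.single p c) (Finsupp.single n a)) (Finsupp.single m b)
      = 0 := by
  have hn : Finsupp.single n a = a • Finsupp.single n (1 : ℂ) := by simp
  have hm : Finsupp.single m b = b • Finsupp.single m (1 : ℂ) := by simp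
  have hp : Finsupp.single p c = c • Finsupp.single p (1 : ℂ) := by simp
  rw [brP_single_single, brP_single_single, brP_single_single, brP_smul_left, brP_smul_left,
    brP_smul_left, hp, hn, hm, brP_smul_right, brP_smul_right, brP_smul_right,
    smul_smul, smul_smul, smul_smul,
    show a * b * c = a * (b * c) from by ring,
    show b * c * a = a * (b * c) from by ring,
    show c * a * b = a * (b * c) from by ring,
    ← smul_add, ← smul_add, defC1_core, smul_zero]

lemma defC1_jacobi_single2 (t : ℂ) (n m : PosIdx) (a b : ℂ) (z : PosIdx →₀ ℂ) :
    brP (defC1 t) (brP (defC1 t) (Finsupp.single n a) (Finsupp.single m b)) z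
      + brP (defC1 t) (brP (defC1 t) (Finsupp.single m b) z) (Finsupp.single n a)
      + brP (defC1 t) (brP (defC1 t) z (Finsupp.single n a)) (Finsupp.single m b) = 0 := by
  induction z using Finsupp.induction with
  | zero => simp [brP_zero_left, brP_zero_right]
  | single_add p c h _ _ ihz =>
    simp only [brP_add_left, brP_add_right]
    exact add6 _ _ _ _ _ _ (defC1_jacobi_single t n m p a b c) ihz

lemma defC1_jacobi_single1 (t : ℂ) (n : PosIdx) (a : ℂ) (y z : PosIdx →₀ ℂ) :
    brP (defC1 t) (brP (defC1 t) (Finsupp.single n a) y) z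
      + brP (defC1 t) (brP (defC1 t) y z) (Finsupp.single n a)
      + brP (defC1 t) (brP (defC1 t) z (Finsupp.single n a)) y = 0 := by
  induction y using Finsupp.induction with
  | zero => simp [brP_zero_left, brP_zero_right]
  | single_add m b g _ _ ihy =>
    simp only [brP_add_left, brP_add_right]
    exact add6 _ _ _ _ _ _ (defC1_jacobi_single2 t n m a b z) ihy

/-- For every `t ∈ ℂ` the deformed bracket satisfies the Jacobi identity. -/
theorem defC1_jacobi (t : ℂ) (x y z : PosIdx →₀ ℂ) :
    brP (defC1 t) (brP (defC1 t) x y) z + brP (defC1 t) (brP (defC1 t) y z) x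
      + brP (defC1 t) (brP (defC1 t) z x) y = 0 := by
  induction x using Finsupp.induction with
  | zero => simp [brP_zero_left, brP_zero_right]
  | single_add n a f _ _ ihx =>
    simp only [brP_add_left, brP_add_right]
    exact add6 _ _ _ _ _ _ (defC1_jacobi_single1 t n a y z) ihx
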